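/- Let r ≥ 4 and t ≥ 2r be integers and let G be an r-graph on vertex set [t]. Let x = (x_1,…,x_t) be an optimal weighting for G with x_1 ≥ x_2 ≥ ⋯ ≥ x_t ≥ 0. Then either x_1 < 2(x_{t−2r+4} + x_{t−2r+5}), or λ(G) ≤ (1/r!)·(t−r)^{r−1}·(∏_{i=t−r+2}^{t−2} i) / ((t−r+1)^{r−2}·(t−1)^{r−2}), and this quantity is strictly less than (1/r!)·(∏_{i=t−r}^{t−1} i)/(t−1)^r = λ([t−1]^{(r)}). -/

import Mathlib

/-- `lagEval E x` is λ(G,x): the sum over the edges of `E` of the product of the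
weights (under `x`) of their vertices. -/
def lagEval (E : Finset (Finset ℕ)) (x : ℕ → ℝ) : ℝ :=
  ∑ e ∈ E, ∏ i ∈ e, x i

/-- A feasible weighting: nonnegative entries, finitely supported, total weight 1. -/
def Feasible (x : ℕ → ℝ) : Prop :=
  (∀ i, 0 ≤ x i) ∧ ∃ S : Finset ℕ, (∀ i ∉ S, x i = 0) ∧ ∑ i ∈ S, x i = 1

/-- A feasible weighting on the vertex set [n] = {1,…,n}. -/
def FeasibleOn (n : ℕ) (x : ℕ → ℝ) : Prop :=
  (∀ i, 0 ≤ x i) ∧ (∀ i ∉ Finset.Icc 1 n, x i = 0) ∧ ∑ i ∈ Finset.Icc 1 n, x i = 1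

/-- The Lagrangian λ(G) of a hypergraph with edge set `E`: the supremum (in fact
maximum) of λ(G,x) over all feasible weightings `x`. -/
noncomputable def lagrangian (E : Finset (Finset ℕ)) : ℝ :=
  sSup {y : ℝ | ∃ x : ℕ → ℝ, Feasible x ∧ lagEval E x = y}

/-- `completeG s r` is [s]^{(r)}, the complete r-graph on {1,…,s}. -/
def completeG (s r : ℕ) : Finset (Finset ℕ) :=
  (Finset.Icc 1 s).powersetCard r

/-- `E` is (the edge set of) an r-graph on the vertex set [n] = {1,…,n}. -/
def IsRGraphOn (r n : ℕ) (E : Finset (Finset ℕ)) : Prop :=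
  ∀ e ∈ E, e.card = r ∧ e ⊆ Finset.Icc 1 n

/-- The r-graph `E` contains a clique of order `s` (inside the vertex set `V`):
some `s`-element subset of `V` has all of its `r`-element subsets as edges. -/
def ContainsCliqueOn (V : Finset ℕ) (r s : ℕ) (E : Finset (Finset ℕ)) : Prop :=
  ∃ S : Finset ℕ, S ⊆ V ∧ S.card = s ∧ S.powersetCard r ⊆ E

/-- `DomLE A B`: `A` and `B` have the same size and, listing both in increasing
order as `i_1 < ⋯ < i_r` and `j_1 < ⋯ < j_r`, one has `i_k ≤ j_k` for all `k`
(equivalently, for every threshold `c`, `A` has at most as many elements above `c`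
as `B`). -/
def DomLE (A B : Finset ℕ) : Prop :=
  A.card = B.card ∧
    ∀ c : ℕ, (A.filter fun a => c < a).card ≤ (B.filter fun b => c < b).card

/-- `E` is left-compressed: together with any edge it contains every set of positive
integers dominating it from the left. -/
def LeftCompressed (E : Finset (Finset ℕ)) : Prop :=
  ∀ B ∈ E, ∀ A : Finset ℕ, (∀ a ∈ A, 1 ≤ a) → DomLE A B → A ∈ E

/-- `nbhd E i` is E_i, the (r-1)-neighborhood of the vertex `i`:
all sets `A` with `i ∉ A` and `A ∪ {i} ∈ E`. -/
def nbhd (E : Finset (Finset ℕ)) (i : ℕ) : Finset (Finset ℕ) :=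
  (E.filter fun e => i ∈ e).image fun e => e.erase i

/-- `nbhd2 E i j` is E_{ij}, the (r-2)-neighborhood of the pair of vertices `i, j`. -/
def nbhd2 (E : Finset (Finset ℕ)) (i j : ℕ) : Finset (Finset ℕ) :=
  (E.filter fun e => i ∈ e ∧ j ∈ e).image fun e => (e.erase i).erase j

/-- `C` consists of the first `m` r-element subsets of {1,2,3,…} in the colex
ordering: it has `m` edges, all of them r-element sets of positive integers, and it
is an initial segment for the colex order. -/
def IsColexSegment (r m : ℕ) (C : Finset (Finset ℕ)) : Prop :=
  C.card = m ∧ (∀ e ∈ C, e.card = r ∧ ∀ a ∈ e, 1 ≤ a) ∧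
    ∀ A B : Finset ℕ, A.card = r → (∀ a ∈ A, 1 ≤ a) → B ∈ C →
      toColex A < toColex B → A ∈ C


open Finset

/-- elementary symmetric sum recurrence -/
lemma esymm_rec (Y : Finset ℕ) (y : ℕ → ℝ) {j : ℕ} (hj : j ∈ Y) (m : ℕ) :
    ∑ A ∈ Y.powersetCard (m+1), ∏ i ∈ A, y i =
      (∑ A ∈ (Y.erase j).powersetCard (m+1), ∏ i ∈ A, y i)
        + y j * ∑ B ∈ (Y.erase j).powersetCard m, ∏ i ∈ B, y i := by
  have hnotmem : j ∉ Y.erase j := notMem_erase _ _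
  have hps := powersetCard_succ_insert hnotmem m
  rw [insert_erase hj] at hps
  rw [show m + 1 = m.succ from rfl, hps, sum_union]
  · congr 1
    rw [sum_image]
    · rw [mul_sum]
      refine sum_congr rfl fun B hB => ?_
      have hjB : j ∉ B := fun h => hnotmem ((mem_powersetCard.1 hB).1 h)
      rw [prod_insert hjB]
    · intro a ha b hb hab
      have hja : j ∉ a := fun h => hnotmem ((mem_powersetCard.1 ha).1 h)
      have hjb : j ∉ b := fun h => hnotmem ((mem_powersetCard.1 hb).1 h)
      calc a = (insert j a).erase j := by rw [erase_insert hja]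
        _ = (insert j b).erase j := by rw [hab]
        _ = b := erase_insert hjb
  · rw [disjoint_left]
    intro A hA hA2
    obtain ⟨B, hB, rfl⟩ := mem_image.1 hA2
    exact (fun h => hnotmem ((mem_powersetCard.1 hA).1 h)) (mem_insert_self _ _)

/-- key inequality: k v (u^{k-1} - v^{k-1}) ≤ (k-1)(u^k - v^k) for 0 ≤ v ≤ u -/
lemma key_ineq (k : ℕ) (u v : ℝ) (hv : 0 ≤ v) (hvu : v ≤ u) :
    (k : ℝ) * v * (u ^ (k-1) - v ^ (k-1)) ≤ ((k:ℝ) - 1) * (u ^ k - v ^ k) := by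
  rcases Nat.eq_zero_or_pos k with rfl | hk
  · simp
  obtain ⟨m, rfl⟩ := Nat.exists_eq_add_of_le hk
  -- k = 1 + m
  have hu : 0 ≤ u := hv.trans hvu
  have h1 : u ^ (1+m) - v ^ (1+m) = (∑ i ∈ range (1+m), u ^ i * v ^ (1+m-1-i)) * (u - v) :=
    (geom_sum₂_mul u v (1+m)).symm
  have h2 : u ^ (1+m-1) - v ^ (1+m-1) = (∑ i ∈ range m, u ^ i * v ^ (m-1-i)) * (u - v) := by
    simpa using (geom_sum₂_mul u v m).symm
  rw [h1, h2]
  have huv : (0:ℝ) ≤ u - v := by linarith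
  rw [show ((1+m:ℕ):ℝ) * v * ((∑ i ∈ range m, u ^ i * v ^ (m-1-i)) * (u - v))
      = (((1+m:ℕ):ℝ) * (v * ∑ i ∈ range m, u ^ i * v ^ (m-1-i))) * (u - v) by ring,
    show (((1+m:ℕ):ℝ) - 1) * ((∑ i ∈ range (1+m), u ^ i * v ^ (1+m-1-i)) * (u - v))
      = ((((1+m:ℕ):ℝ) - 1) * ∑ i ∈ range (1+m), u ^ i * v ^ (1+m-1-i)) * (u - v) by ring]
  apply mul_le_mul_of_nonneg_right _ huv
  have hvsum : v * ∑ i ∈ range m, u ^ i * v ^ (m-1-i) = ∑ i ∈ range m, u ^ i * v ^ (m-i) := by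
    rw [mul_sum]
    refine sum_congr rfl fun i hi => ?_
    have him : i < m := mem_range.1 hi
    rw [show m - i = (m - 1 - i) + 1 by omega]
    ring
  rw [hvsum]
  -- goal: (1+m) * ∑_{i<m} u^i v^{m-i} ≤ m * ∑_{i<1+m} u^i v^{m-i}
  have hA : ∀ i ∈ range m, u ^ i * v ^ (m - i) ≤ u ^ m := by
    intro i hi
    have him : i < m := mem_range.1 hi
    calc u ^ i * v ^ (m-i) ≤ u ^ i * u ^ (m-i) := by
          apply mul_le_mul_of_nonneg_left (pow_le_pow_left₀ hv hvu _) (pow_nonneg hu _)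
      _ = u ^ m := by rw [← pow_add]; congr 1; omega
  have hsum1 : ∑ i ∈ range m, u ^ i * v ^ (m-i) ≤ (m:ℝ) * u ^ m := by
    calc ∑ i ∈ range m, u ^ i * v ^ (m-i) ≤ ∑ _i ∈ range m, u ^ m := sum_le_sum hA
      _ = (m:ℝ) * u ^ m := by rw [sum_const, card_range, nsmul_eq_mul]
  have hsplit : ∑ i ∈ range (1+m), u ^ i * v ^ (1+m-1-i)
      = (∑ i ∈ range m, u ^ i * v ^ (m-i)) + u ^ m := by
    have hc : ∀ i ∈ range (1+m), u ^ i * v ^ (1+m-1-i) = u ^ i * v ^ (m-i) := by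
      intro i hi
      congr 2
      omega
    rw [sum_congr rfl hc, add_comm 1 m, sum_range_succ, Nat.sub_self, pow_zero, mul_one]
  rw [hsplit]
  push_cast
  nlinarith [hsum1]

lemma maclaurin (n : ℕ) : ∀ (Y : Finset ℕ) (k : ℕ) (y : ℕ → ℝ), Y.card = n →
    (∀ i ∈ Y, 0 ≤ y i) →
    ∑ A ∈ Y.powersetCard k, ∏ i ∈ A, y i ≤ (n.choose k : ℝ) * ((∑ i ∈ Y, y i) / n) ^ k := by
  induction n with
  | zero =>
    intro Y k y hcard hy
    rcases k with _ | m
    · simp [powersetCard_zero]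
    · rw [card_eq_zero.1 hcard, powersetCard_eq_empty.2 (by simp)]
      simp
  | succ n ih =>
    intro Y k y hcard hy
    have hS0 : 0 ≤ ∑ i ∈ Y, y i := sum_nonneg hy
    set S : ℝ := ∑ i ∈ Y, y i with hSdef
    rcases k with _ | m
    · simp [powersetCard_zero]
    -- k = m + 1 ≥ 1
    by_cases hkn : n + 1 < m + 1
    · -- k > card : both sides 0
      rw [powersetCard_eq_empty.2 (hcard ▸ hkn), Nat.choose_eq_zero_of_lt hkn]
      simp
    push_neg at hkn
    -- pick j with y j ≤ S / (n+1)
    have hne : Y.Nonempty := card_pos.1 (by omega)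
    obtain ⟨j, hjY, hjle⟩ : ∃ j ∈ Y, y j ≤ S / (n + 1) := by
      apply exists_le_of_sum_le hne
      rw [sum_const, hcard, nsmul_eq_mul]
      push_cast
      rw [mul_div_cancel₀ _ (by positivity : ((n:ℝ)+1) ≠ 0)]
    have hz0 : 0 ≤ y j := hy j hjY
    have hY'card : (Y.erase j).card = n := by rw [card_erase_of_mem hjY, hcard]; omega
    have hY'y : ∀ i ∈ Y.erase j, 0 ≤ y i := fun i hi => hy i (mem_of_mem_erase hi)
    have hS' : ∑ i ∈ Y.erase j, y i = S - y j := sum_erase_eq_sub hjY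
    rcases Nat.eq_zero_or_pos n with rfl | hn1
    · -- card Y = 1
      obtain ⟨a, rfl⟩ := card_eq_one.1 hcard
      have hja : j = a := by simpa using hjY
      rcases m with _ | m'
      · -- k = 1
        rw [powersetCard_one]
        simp [hja, hSdef]
      · omega
    -- now n ≥ 1, 1 ≤ m+1 ≤ n+1
    have hrec := esymm_rec Y y hjY m
    have hIH1 := ih (Y.erase j) (m+1) y hY'card hY'y
    have hIH2 := ih (Y.erase j) m y hY'card hY'y
    rw [hS'] at hIH1 hIH2
    set u : ℝ := (S - y j) / n with hudef
    set v : ℝ := S / (n+1) with hvdef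
    have hv0 : 0 ≤ v := by positivity
    have hu0 : 0 ≤ u := by
      have : 0 ≤ S - y j := by
        rw [← hS']; exact sum_nonneg hY'y
      positivity
    have hvS : v * ((n:ℝ)+1) = S := div_mul_cancel₀ _ (by positivity)
    have hmul : y j * ((n:ℝ)+1) ≤ S := by
      calc y j * ((n:ℝ)+1) ≤ v * ((n:ℝ)+1) :=
            mul_le_mul_of_nonneg_right hjle (by positivity)
        _ = S := hvS
    have hvu : v ≤ u := by
      rw [hudef, hvdef, div_le_div_iff₀ (by positivity) (by positivity)]
      nlinarith [hmul]
    have hzval : y j = (n+1) * v - n * u := by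
      rw [hudef, hvdef]
      field_simp
      ring
    have key := key_ineq (m+1) u v hv0 hvu
    simp only [Nat.add_sub_cancel] at key
    -- choose identity: (m+1) * C(n, m+1) = C(n, m) * (n - m)
    have hch : ((m+1 : ℕ) : ℝ) * (n.choose (m+1) : ℝ) = (n.choose m : ℝ) * ((n - m : ℕ) : ℝ) := by
      rw [← Nat.cast_mul, ← Nat.cast_mul, mul_comm ((m+1:ℕ)) _, Nat.choose_succ_right_eq]
    have hnm : ((n - m : ℕ) : ℝ) = (n : ℝ) - m := by
      have : m ≤ n := by omega
      push_cast [this]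
      ring
    rw [hnm] at hch
    have hpascal : ((n+1).choose (m+1) : ℝ) = (n.choose m : ℝ) + (n.choose (m+1) : ℝ) := by
      rw [Nat.choose_succ_succ]
      push_cast
      ring
    have hc2 : (0:ℝ) ≤ (n.choose m : ℝ) := by positivity
    have hgoal2 : (n.choose (m+1) : ℝ) * u ^ (m+1) + y j * ((n.choose m : ℝ) * u ^ m)
        ≤ ((n.choose m : ℝ) + (n.choose (m+1) : ℝ)) * v ^ (m+1) := by
      have hkey2 : (n.choose m : ℝ) * (n+1) * (((m+1:ℕ):ℝ) * v * (u ^ m - v ^ m))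
          ≤ (n.choose m : ℝ) * (n+1) * ((((m+1:ℕ):ℝ) - 1) * (u ^ (m+1) - v ^ (m+1))) := by
        apply mul_le_mul_of_nonneg_left key (by positivity)
      push_cast at hkey2 hch ⊢
      rw [hzval, pow_succ u m, pow_succ v m]
      rw [pow_succ u m, pow_succ v m] at hkey2
      have hch2 : ((m:ℝ)+1) * (n.choose (m+1) : ℝ) * (u^m*u - v^m*v)
          = (n.choose m : ℝ) * ((n:ℝ)-(m:ℝ)) * (u^m*u - v^m*v) := by
        linear_combination (u^m*u - v^m*v) * hch
      have hmpos : (0:ℝ) < (m:ℝ)+1 := by positivity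
      rw [← mul_le_mul_iff_right₀ hmpos]
      ring_nf
      ring_nf at hkey2 hch2
      linarith [hkey2, hch2]
    calc ∑ A ∈ Y.powersetCard (m+1), ∏ i ∈ A, y i
        = (∑ A ∈ (Y.erase j).powersetCard (m+1), ∏ i ∈ A, y i)
          + y j * ∑ B ∈ (Y.erase j).powersetCard m, ∏ i ∈ B, y i := hrec
      _ ≤ (n.choose (m+1) : ℝ) * u ^ (m+1) + y j * ((n.choose m : ℝ) * u ^ m) := by
          apply add_le_add hIH1
          exact mul_le_mul_of_nonneg_left hIH2 hz0
      _ ≤ ((n.choose m : ℝ) + (n.choose (m+1) : ℝ)) * v ^ (m+1) := hgoal2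
      _ = ((n+1).choose (m+1) : ℝ) * (S / (n+1)) ^ (m+1) := by rw [hpascal, hvdef]
      _ = (((n+1:ℕ)).choose (m+1) : ℝ) * (S / ((n+1:ℕ):ℝ) ) ^ (m+1) := by push_cast; ring

lemma lagEval_nonneg (E : Finset (Finset ℕ)) (x : ℕ → ℝ) (hx : ∀ i, 0 ≤ x i) :
    0 ≤ lagEval E x :=
  sum_nonneg fun e _ => prod_nonneg fun i _ => hx i

lemma feasible_le_one {x : ℕ → ℝ} (hx : Feasible x) (i : ℕ) : x i ≤ 1 := by
  obtain ⟨hx0, S, hS0, hS1⟩ := hx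
  by_cases hi : i ∈ S
  · rw [← hS1]
    exact single_le_sum (fun j _ => hx0 j) hi
  · rw [hS0 i hi]; norm_num

lemma lagEval_le_card (E : Finset (Finset ℕ)) {x : ℕ → ℝ} (hx : Feasible x) :
    lagEval E x ≤ E.card := by
  unfold lagEval
  calc ∑ e ∈ E, ∏ i ∈ e, x i ≤ ∑ e ∈ E, 1 := by
        apply sum_le_sum
        intro e _
        apply prod_le_one (fun i _ => hx.1 i) (fun i _ => feasible_le_one hx i)
    _ = E.card := by simp
  
lemma bddAbove_lagSet (E : Finset (Finset ℕ)) :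
    BddAbove {y : ℝ | ∃ x : ℕ → ℝ, Feasible x ∧ lagEval E x = y} := by
  refine ⟨E.card, ?_⟩
  rintro y ⟨x, hx, rfl⟩
  exact lagEval_le_card E hx

lemma le_lagrangian (E : Finset (Finset ℕ)) {x : ℕ → ℝ} (hx : Feasible x) :
    lagEval E x ≤ lagrangian E :=
  le_csSup (bddAbove_lagSet E) ⟨x, hx, rfl⟩

lemma feasibleOn_feasible {n : ℕ} {x : ℕ → ℝ} (hx : FeasibleOn n x) : Feasible x :=
  ⟨hx.1, Finset.Icc 1 n, hx.2.1, hx.2.2⟩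

noncomputable def unif (m : ℕ) : ℕ → ℝ := fun i => if i ∈ Finset.Icc 1 m then 1/(m:ℝ) else 0

lemma unif_feasible {m : ℕ} (hm : 1 ≤ m) : Feasible (unif m) := by
  have hmcard : (Finset.Icc 1 m).card = m := by rw [Nat.card_Icc]; omega
  refine ⟨fun i => ?_, Finset.Icc 1 m, fun i hi => by simp [unif, hi], ?_⟩
  · unfold unif; split <;> positivity
  · simp only [unif]
    rw [Finset.sum_congr rfl (fun i hi => if_pos hi), sum_const,
      hmcard, nsmul_eq_mul, mul_one_div, div_self (by positivity)]

lemma lagEval_complete_unif (m r : ℕ) :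
    lagEval (completeG m r) (unif m) = (m.choose r : ℝ) / (m:ℝ) ^ r := by
  have hmcard : (Finset.Icc 1 m).card = m := by rw [Nat.card_Icc]; omega
  unfold lagEval completeG
  rw [Finset.sum_congr rfl (fun A hA => ?_), sum_const, card_powersetCard, hmcard,
    nsmul_eq_mul, div_eq_mul_inv]
  have hA' := mem_powersetCard.1 hA
  simp only [unif]
  rw [Finset.prod_congr rfl (fun i hi => if_pos (hA'.1 hi)),
    prod_const, hA'.2, one_div, inv_pow]

lemma sum_Icc_le_one {m : ℕ} {x : ℕ → ℝ} (hx : Feasible x) :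
    ∑ i ∈ Finset.Icc 1 m, x i ≤ 1 := by
  obtain ⟨hx0, S, hS0, hS1⟩ := hx
  calc ∑ i ∈ Finset.Icc 1 m, x i = ∑ i ∈ (Finset.Icc 1 m).filter (· ∈ S), x i := by
        rw [sum_filter_of_ne]
        intro i hi hxi
        by_contra hiS
        exact hxi (hS0 i hiS)
    _ ≤ ∑ i ∈ S, x i := sum_le_sum_of_subset_of_nonneg
        (fun i hi => (mem_filter.1 hi).2) (fun i _ _ => hx0 i)
    _ = 1 := hS1

/-- value of the Lagrangian of the complete r-graph on [m], m ≥ 1 -/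
lemma lagrangian_complete (m r : ℕ) (hm : 1 ≤ m) :
    lagrangian (completeG m r) = (m.choose r : ℝ) / (m : ℝ) ^ r := by
  have hmcard : (Finset.Icc 1 m).card = m := by rw [Nat.card_Icc]; omega
  have hmpos : (0:ℝ) < m := by positivity
  apply le_antisymm
  · apply csSup_le
    · exact ⟨lagEval (completeG m r) (unif m), unif m, unif_feasible hm, rfl⟩
    · rintro y ⟨x, hx, rfl⟩
      have hmac := maclaurin m (Finset.Icc 1 m) r x hmcard (fun i _ => hx.1 i)
      unfold lagEval completeG
      refine hmac.trans ?_
      have hsle : ∑ i ∈ Finset.Icc 1 m, x i ≤ 1 := sum_Icc_le_one hx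
      have h0 : 0 ≤ ∑ i ∈ Finset.Icc 1 m, x i := sum_nonneg fun i _ => hx.1 i
      rw [div_eq_mul_inv ((m.choose r : ℝ)) _]
      apply mul_le_mul_of_nonneg_left _ (by positivity)
      calc ((∑ i ∈ Finset.Icc 1 m, x i) / m) ^ r ≤ ((1:ℝ)/m) ^ r := by
            gcongr
          _ = ((m:ℝ)^r)⁻¹ := by rw [one_div, inv_pow]
  · rw [← lagEval_complete_unif m r]
    exact le_lagrangian _ (unif_feasible hm)

section KKT

variable {r t : ℕ} {E : Finset (Finset ℕ)} {x : ℕ → ℝ}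

/-- the degree/link value of vertex j -/
noncomputable def lam (E : Finset (Finset ℕ)) (x : ℕ → ℝ) (j : ℕ) : ℝ :=
  ∑ e ∈ E.filter (fun e => j ∈ e), ∏ i ∈ e.erase j, x i

lemma sum_x_lam (hE : IsRGraphOn r t E) :
    ∑ i ∈ Finset.Icc 1 t, x i * lam E x i = (r : ℝ) * lagEval E x := by
  unfold lam lagEval
  have step1 : ∀ i, x i * ∑ e ∈ E.filter (fun e => i ∈ e), ∏ i' ∈ e.erase i, x i'
      = ∑ e ∈ E, if i ∈ e then ∏ i' ∈ e, x i' else 0 := by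
    intro i
    rw [mul_sum, sum_filter]
    refine sum_congr rfl fun e _ => ?_
    by_cases hie : i ∈ e
    · rw [if_pos hie, if_pos hie, mul_prod_erase e x hie]
    · simp [hie]
  rw [Finset.sum_congr rfl fun i _ => step1 i, sum_comm, mul_sum]
  refine sum_congr rfl fun e he => ?_
  rw [sum_ite_mem, (inter_eq_right).2 (hE e he).2, sum_const, (hE e he).1, nsmul_eq_mul]

lemma lam_le_lam_one (hE : IsRGraphOn r t E) (hfeas : FeasibleOn t x)
    (hopt : lagEval E x = lagrangian E)
    (hmono : ∀ i j : ℕ, 1 ≤ i → i ≤ j → j ≤ t → x j ≤ x i)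
    (ht : 1 ≤ t) {j : ℕ} (hj : j ∈ Finset.Icc 1 t) : lam E x j ≤ lam E x 1 := by
  obtain ⟨hx0, hsupp, hsum⟩ := hfeas
  rcases eq_or_ne j 1 with rfl | hj1
  · exact le_rfl
  have hj2 : 2 ≤ j := by
    have := (Finset.mem_Icc.1 hj).1
    omega
  have hjt : j ≤ t := (Finset.mem_Icc.1 hj).2
  have h1t : 1 ∈ Finset.Icc 1 t := Finset.mem_Icc.2 ⟨le_refl 1, ht⟩
  have hxj1 : x j ≤ x 1 := hmono 1 j le_rfl (by omega) hjt
  have hx1pos : 0 < x 1 := by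
    by_contra hcon
    push_neg at hcon
    have hall : ∀ i ∈ Finset.Icc 1 t, x i = 0 := by
      intro i hi
      have h1i : x i ≤ x 1 := hmono 1 i le_rfl (Finset.mem_Icc.1 hi).1 (Finset.mem_Icc.1 hi).2
      have := hx0 i
      nlinarith
    rw [Finset.sum_congr rfl hall, sum_const_zero] at hsum
    norm_num at hsum
  -- the four sums
  set P : ℝ := ∑ e ∈ E.filter (fun e => 1 ∈ e ∧ j ∈ e), ∏ i ∈ (e.erase 1).erase j, x i with hP
  set A1 : ℝ := ∑ e ∈ E.filter (fun e => 1 ∈ e ∧ ¬ j ∈ e), ∏ i ∈ e.erase 1, x i with hA1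
  set Aj : ℝ := ∑ e ∈ E.filter (fun e => j ∈ e ∧ ¬ 1 ∈ e), ∏ i ∈ e.erase j, x i with hAj
  have hP0 : 0 ≤ P := sum_nonneg fun e _ => prod_nonneg fun i _ => hx0 i
  have hlam1 : lam E x 1 = x j * P + A1 := by
    unfold lam
    rw [← sum_filter_add_sum_filter_not (E.filter fun e => 1 ∈ e) (fun e => j ∈ e),
      filter_filter, filter_filter]
    congr 1
    rw [mul_sum]
    refine sum_congr rfl fun e he => ?_
    have hee := mem_filter.1 he
    have hje : j ∈ e.erase 1 := mem_erase.2 ⟨hj1, hee.2.2⟩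
    rw [mul_prod_erase _ x hje]
  have hlamj : lam E x j = x 1 * P + Aj := by
    unfold lam
    rw [← sum_filter_add_sum_filter_not (E.filter fun e => j ∈ e) (fun e => 1 ∈ e),
      filter_filter, filter_filter]
    congr 1
    · rw [mul_sum]
      rw [show E.filter (fun e => j ∈ e ∧ 1 ∈ e) = E.filter (fun e => 1 ∈ e ∧ j ∈ e) by
        apply filter_congr; intro e _; simp [and_comm]]
      refine sum_congr rfl fun e he => ?_
      have hee := mem_filter.1 he
      have h1e : (1:ℕ) ∈ e.erase j := mem_erase.2 ⟨(Ne.symm hj1), hee.2.1⟩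
      rw [erase_right_comm, mul_prod_erase _ x h1e]
  -- key perturbation inequality
  have hkey : ∀ δ : ℝ, 0 < δ → δ ≤ x 1 → lam E x j - lam E x 1 ≤ δ * P := by
    intro δ hδ0 hδ1
    set y : ℕ → ℝ := Function.update (Function.update x j (x j + δ)) 1 (x 1 - δ) with hy
    have hyval : ∀ i, i ≠ 1 → i ≠ j → y i = x i := by
      intro i hi1 hij
      rw [hy, Function.update_of_ne hi1, Function.update_of_ne hij]
    have hy1 : y 1 = x 1 - δ := by rw [hy, Function.update_self]
    have hyj : y j = x j + δ := by
      rw [hy, Function.update_of_ne hj1, Function.update_self]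
    have hyfeas : Feasible y := by
      refine ⟨fun i => ?_, Finset.Icc 1 t, fun i hi => ?_, ?_⟩
      · rcases eq_or_ne i 1 with rfl | hi1
        · rw [hy1]; linarith
        rcases eq_or_ne i j with rfl | hij
        · rw [hyj]; have := hx0 i; linarith
        · rw [hyval i hi1 hij]; exact hx0 i
      · have hi1 : i ≠ 1 := fun h => hi (h ▸ h1t)
        have hij : i ≠ j := fun h => hi (h ▸ hj)
        rw [hyval i hi1 hij]; exact hsupp i hi
      · have hjmem : j ∈ Icc 1 t \ {1} := mem_sdiff.2 ⟨hj, by simp [hj1]⟩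
        rw [hy, sum_update_of_mem h1t, sum_update_of_mem hjmem]
        have hx' : ∑ i ∈ Icc 1 t, x i
            = x 1 + (x j + ∑ i ∈ (Icc 1 t \ {1}) \ {j}, x i) := by
          rw [sum_eq_add_sum_sdiff_singleton_of_mem h1t, sum_eq_add_sum_sdiff_singleton_of_mem hjmem]
        rw [← hsum, hx']
        ring
    have hle : lagEval E y ≤ lagEval E x := by
      rw [hopt]
      exact le_lagrangian E hyfeas
    -- expand lagEval E y and lagEval E x over the split
    have expand : ∀ z : ℕ → ℝ, (∀ i, i ≠ 1 → i ≠ j → z i = x i) →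
        lagEval E z = z 1 * z j * P + z 1 * A1 + z j * Aj
          + ∑ e ∈ E.filter (fun e => ¬ 1 ∈ e ∧ ¬ j ∈ e), ∏ i ∈ e, x i := by
      intro z hz
      unfold lagEval
      rw [← sum_filter_add_sum_filter_not E (fun e => 1 ∈ e),
        ← sum_filter_add_sum_filter_not (E.filter (fun e => 1 ∈ e)) (fun e => j ∈ e),
        ← sum_filter_add_sum_filter_not (E.filter (fun e => ¬ 1 ∈ e)) (fun e => j ∈ e)]
      simp only [filter_filter]
      have t11 : ∑ e ∈ E.filter (fun e => 1 ∈ e ∧ j ∈ e), ∏ i ∈ e, z i = z 1 * z j * P := by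
        rw [hP, mul_sum]
        refine sum_congr rfl fun e he => ?_
        have hee := mem_filter.1 he
        have h1e : (1:ℕ) ∈ e := hee.2.1
        have hje' : j ∈ e.erase 1 := mem_erase.2 ⟨hj1, hee.2.2⟩
        rw [← mul_prod_erase e z h1e, ← mul_prod_erase _ z hje', ← mul_assoc]
        congr 1
        refine prod_congr rfl fun i hi => ?_
        have hi' := mem_erase.1 hi
        have hi'' := mem_erase.1 hi'.2
        exact hz i hi''.1 hi'.1
      have t10 : ∑ e ∈ E.filter (fun e => 1 ∈ e ∧ ¬ j ∈ e), ∏ i ∈ e, z i = z 1 * A1 := by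
        rw [hA1, mul_sum]
        refine sum_congr rfl fun e he => ?_
        have hee := mem_filter.1 he
        rw [← mul_prod_erase e z hee.2.1]
        congr 1
        refine prod_congr rfl fun i hi => ?_
        have hi' := mem_erase.1 hi
        exact hz i hi'.1 (fun h => hee.2.2 (h ▸ hi'.2))
      have t01 : ∑ e ∈ E.filter (fun e => ¬ 1 ∈ e ∧ j ∈ e), ∏ i ∈ e, z i = z j * Aj := by
        rw [hAj, mul_sum]
        rw [show E.filter (fun e => ¬ 1 ∈ e ∧ j ∈ e) = E.filter (fun e => j ∈ e ∧ ¬ 1 ∈ e) by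
          apply filter_congr; intro e _; simp [and_comm]]
        refine sum_congr rfl fun e he => ?_
        have hee := mem_filter.1 he
        rw [← mul_prod_erase e z hee.2.1]
        congr 1
        refine prod_congr rfl fun i hi => ?_
        have hi' := mem_erase.1 hi
        exact hz i (fun h => hee.2.2 (h ▸ hi'.2)) hi'.1
      have t00 : ∑ e ∈ E.filter (fun e => ¬ 1 ∈ e ∧ ¬ j ∈ e), ∏ i ∈ e, z i
          = ∑ e ∈ E.filter (fun e => ¬ 1 ∈ e ∧ ¬ j ∈ e), ∏ i ∈ e, x i := by
        refine sum_congr rfl fun e he => ?_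
        have hee := mem_filter.1 he
        refine prod_congr rfl fun i hi => ?_
        exact hz i (fun h => hee.2.1 (h ▸ hi)) (fun h => hee.2.2 (h ▸ hi))
      rw [t11, t10, t01, t00]
      ring
    have ex : lagEval E x = x 1 * x j * P + x 1 * A1 + x j * Aj
        + ∑ e ∈ E.filter (fun e => ¬ 1 ∈ e ∧ ¬ j ∈ e), ∏ i ∈ e, x i :=
      expand x (fun _ _ _ => rfl)
    have ey : lagEval E y = (x 1 - δ) * (x j + δ) * P + (x 1 - δ) * A1 + (x j + δ) * Aj
        + ∑ e ∈ E.filter (fun e => ¬ 1 ∈ e ∧ ¬ j ∈ e), ∏ i ∈ e, x i := by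
      rw [expand y hyval, hy1, hyj]
    rw [ex, ey] at hle
    rw [hlam1, hlamj]
    nlinarith [hle, hδ0, hxj1, hP0]
  -- conclude via limit δ → 0
  by_contra hcon
  push_neg at hcon
  set ε : ℝ := lam E x j - lam E x 1 with hε
  have hε0 : 0 < ε := by rw [hε]; linarith
  have hδ := hkey (min (x 1) (ε / (2 * (P + 1)))) (by positivity)
    (min_le_left _ _)
  have hlt : min (x 1) (ε / (2 * (P + 1))) * P < ε := by
    calc min (x 1) (ε / (2 * (P + 1))) * P ≤ (ε / (2 * (P + 1))) * P :=
          mul_le_mul_of_nonneg_right (min_le_right _ _) hP0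
      _ < ε := by
          rw [div_mul_eq_mul_div, div_lt_iff₀ (by positivity)]
          nlinarith
  linarith

end KKT

lemma choose_mul_factorial_eq_prod (n k : ℕ) (hk : k ≤ n) :
    n.choose k * k.factorial = ∏ i ∈ Finset.Icc (n-k+1) n, i := by
  have himg : Finset.image (fun i => n - i) (range k) = Finset.Icc (n-k+1) n := by
    ext a
    simp only [mem_image, mem_Icc, mem_range]
    constructor
    · rintro ⟨i, hi, rfl⟩; omega
    · intro ha; exact ⟨n - a, by omega, by omega⟩
  rw [← himg, prod_image (fun i hi j hj h => by
    simp only [mem_coe, mem_range] at hi hj; omega)]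
  rw [← Nat.descFactorial_eq_prod_range, Nat.descFactorial_eq_factorial_mul_choose, mul_comm]

lemma Icc_two_eq : ∀ t : ℕ, (Finset.Icc 1 t).erase 1 = Finset.Icc 2 t := by
  intro t; ext i
  simp only [mem_erase, mem_Icc]
  omega

/-- the main bound: r·λ(G,x) ≤ C(t-1, r-1)·((1-x₁)/(t-1))^(r-1) -/
lemma main_ineq {r t : ℕ} {E : Finset (Finset ℕ)} {x : ℕ → ℝ}
    (hr : 1 ≤ r) (ht : 1 ≤ t) (hE : IsRGraphOn r t E) (hfeas : FeasibleOn t x)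
    (hopt : lagEval E x = lagrangian E)
    (hmono : ∀ i j : ℕ, 1 ≤ i → i ≤ j → j ≤ t → x j ≤ x i) :
    (r : ℝ) * lagEval E x ≤
      ((t-1).choose (r-1) : ℝ) * ((1 - x 1) / ((t-1 : ℕ) : ℝ)) ^ (r-1) := by
  obtain ⟨hx0, hsupp, hsum⟩ := hfeas
  have h1t : 1 ∈ Finset.Icc 1 t := Finset.mem_Icc.2 ⟨le_rfl, ht⟩
  -- step 1 : r λ ≤ lam 1
  have step1 : (r : ℝ) * lagEval E x ≤ lam E x 1 := by
    rw [← sum_x_lam hE]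
    calc ∑ i ∈ Finset.Icc 1 t, x i * lam E x i
        ≤ ∑ i ∈ Finset.Icc 1 t, x i * lam E x 1 := by
          apply sum_le_sum
          intro i hi
          exact mul_le_mul_of_nonneg_left
            (lam_le_lam_one hE ⟨hx0, hsupp, hsum⟩ hopt hmono ht hi) (hx0 i)
      _ = lam E x 1 := by rw [← sum_mul, hsum, one_mul]
  -- step 2 : lam 1 ≤ e_{r-1}(x on [2,t])
  have step2 : lam E x 1 ≤ ∑ A ∈ (Finset.Icc 2 t).powersetCard (r-1), ∏ i ∈ A, x i := by
    unfold lam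
    have hinj : ∀ e ∈ E.filter (fun e => 1 ∈ e), ∀ e' ∈ E.filter (fun e => 1 ∈ e),
        e.erase 1 = e'.erase 1 → e = e' := by
      intro e he e' he' h
      have h1 := (mem_filter.1 he).2
      have h2 := (mem_filter.1 he').2
      rw [← insert_erase h1, ← insert_erase h2, h]
    rw [show (∑ e ∈ E.filter (fun e => 1 ∈ e), ∏ i ∈ e.erase 1, x i)
        = ∑ A ∈ (E.filter (fun e => 1 ∈ e)).image (fun e => e.erase 1), ∏ i ∈ A, x i from
      (sum_image (f := fun A => ∏ i ∈ A, x i) (g := fun e : Finset ℕ => e.erase 1) hinj).symm]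
    apply sum_le_sum_of_subset_of_nonneg
    · intro A hA
      obtain ⟨e, he, rfl⟩ := mem_image.1 hA
      have he' := mem_filter.1 he
      rw [mem_powersetCard]
      constructor
      · intro i hi
        have hi' := mem_erase.1 hi
        have := (hE e he'.1).2 hi'.2
        rw [Finset.mem_Icc] at this ⊢
        omega
      · rw [card_erase_of_mem he'.2, (hE e he'.1).1]
    · intro A _ _
      exact prod_nonneg fun i _ => hx0 i
  -- step 3 : maclaurin
  have hcard2 : (Finset.Icc 2 t).card = t - 1 := by rw [Nat.card_Icc]; omega
  have hsum2 : ∑ i ∈ Finset.Icc 2 t, x i = 1 - x 1 := by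
    have := sum_eq_add_sum_sdiff_singleton_of_mem h1t x
    rw [hsum] at this
    have hset : Finset.Icc 1 t \ {1} = Finset.Icc 2 t := by
      ext i; simp only [mem_sdiff, mem_Icc, mem_singleton]; omega
    rw [hset] at this
    linarith
  have step3 := maclaurin (t-1) (Finset.Icc 2 t) (r-1) x hcard2 (fun i _ => hx0 i)
  rw [hsum2] at step3
  exact step1.trans (step2.trans step3)

lemma prod_split_bot {a b : ℕ} (h : a ≤ b) (f : ℕ → ℕ) :
    ∏ i ∈ Finset.Icc a b, f i = f a * ∏ i ∈ Finset.Icc (a+1) b, f i := by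
  have h1 : Finset.Icc a b = insert a (Finset.Icc (a+1) b) := by
    ext i; simp only [mem_insert, mem_Icc]; omega
  rw [h1, prod_insert (by simp only [mem_Icc]; omega)]

lemma prod_split_top {a b : ℕ} (ha : a ≤ b) (hb : 1 ≤ b) (f : ℕ → ℕ) :
    ∏ i ∈ Finset.Icc a b, f i = (∏ i ∈ Finset.Icc a (b-1), f i) * f b := by
  have h1 : Finset.Icc a b = insert b (Finset.Icc a (b-1)) := by
    ext i; simp only [mem_insert, mem_Icc]; omega
  rw [h1, prod_insert (by simp only [mem_Icc]; omega), mul_comm]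

set_option maxHeartbeats 1000000 in
/-- Lemma 2.6(b): for an r-graph `G` on `[t]` (`r ≥ 4`, `t ≥ 2r`) with an optimal
weighting `x` satisfying `x_1 ≥ ⋯ ≥ x_t ≥ 0`, either
`x_1 < 2(x_{t−2r+4} + x_{t−2r+5})`, or λ(G) is at most the stated bound, which is
strictly smaller than `(1/r!)·(∏_{i=t−r}^{t−1} i)/(t−1)^r = λ([t−1]^{(r)})`. -/
theorem stmt13 (r t : ℕ) (hr : 4 ≤ r) (ht : 2 * r ≤ t)
    (E : Finset (Finset ℕ)) (hE : IsRGraphOn r t E)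
    (x : ℕ → ℝ) (hfeas : FeasibleOn t x) (hopt : lagEval E x = lagrangian E)
    (hmono : ∀ i j : ℕ, 1 ≤ i → i ≤ j → j ≤ t → x j ≤ x i) :
    x 1 < 2 * (x (t - 2 * r + 4) + x (t - 2 * r + 5)) ∨
      (lagrangian E ≤
          1 / (r.factorial : ℝ) * ((t : ℝ) - r) ^ (r - 1) *
            (∏ i ∈ Finset.Icc (t - r + 2) (t - 2), (i : ℝ)) /
            (((t : ℝ) - r + 1) ^ (r - 2) * ((t : ℝ) - 1) ^ (r - 2)) ∧
        1 / (r.factorial : ℝ) * ((t : ℝ) - r) ^ (r - 1) *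
            (∏ i ∈ Finset.Icc (t - r + 2) (t - 2), (i : ℝ)) /
            (((t : ℝ) - r + 1) ^ (r - 2) * ((t : ℝ) - 1) ^ (r - 2)) <
          1 / (r.factorial : ℝ) * (∏ i ∈ Finset.Icc (t - r) (t - 1), (i : ℝ)) /
            ((t : ℝ) - 1) ^ r ∧
        1 / (r.factorial : ℝ) * (∏ i ∈ Finset.Icc (t - r) (t - 1), (i : ℝ)) /
            ((t : ℝ) - 1) ^ r = lagrangian (completeG (t - 1) r)) := by
  by_cases hcase : x 1 < 2 * (x (t - 2 * r + 4) + x (t - 2 * r + 5))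
  · exact Or.inl hcase
  right
  push_neg at hcase
  -- basic facts
  have hrt : r ≤ t := by omega
  set g : ℝ := (t : ℝ) - r with hgdef
  set G1 : ℝ := (t : ℝ) - r + 1 with hG1def
  set T : ℝ := (t : ℝ) - 1 with hTdef
  have hcast_tr : ((t - r : ℕ) : ℝ) = g := by rw [hgdef, Nat.cast_sub hrt]
  have hcast_tr1 : ((t - r + 1 : ℕ) : ℝ) = G1 := by
    rw [hG1def]; push_cast [Nat.cast_sub hrt]; ring
  have hcast_t1 : ((t - 1 : ℕ) : ℝ) = T := by
    rw [hTdef]; push_cast [Nat.cast_sub (show 1 ≤ t by omega)]; ring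
  have hg4 : (4:ℝ) ≤ g := by
    rw [hgdef]
    have : (r:ℝ) + 4 ≤ (t:ℝ) := by exact_mod_cast (by omega : r + 4 ≤ t)
    linarith
  have hgpos : (0:ℝ) < g := by linarith
  have hG1pos : (0:ℝ) < G1 := by rw [hG1def, ← hgdef]; linarith
  have hG1g : G1 = g + 1 := by rw [hG1def, hgdef]
  have hTpos : (0:ℝ) < T := by
    rw [hTdef]
    have : (8:ℝ) ≤ (t:ℝ) := by exact_mod_cast (by omega : 8 ≤ t)
    linarith
  have hrpos : (0:ℝ) < (r:ℝ) := by positivity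
  have hFpos : (0:ℝ) < (r.factorial : ℝ) := by positivity
  -- the real product over Icc (t-r+2) (t-2)
  set Pi : ℝ := ∏ i ∈ Finset.Icc (t - r + 2) (t - 2), (i : ℝ) with hPidef
  have hPipos : (0:ℝ) < Pi := by
    rw [hPidef]
    apply prod_pos
    intro i hi
    have := (Finset.mem_Icc.1 hi).1
    have : 1 ≤ i := by omega
    exact_mod_cast (by omega : 0 < i)
  -- STEP A : x 1 ≥ 1 / G1
  have hx1ge : 1 / G1 ≤ x 1 := by
    set s : ℕ := t - 2*r + 4 with hsdef
    have hs5 : t - 2*r + 5 = s + 1 := by omega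
    rw [hs5] at hcase
    have hst : s + 1 ≤ t := by omega
    -- split the sum
    have hsplit1 : Finset.Icc 1 t = Finset.Icc 1 (s-1) ∪ Finset.Icc s t := by
      ext i; simp only [mem_union, mem_Icc]; omega
    have hdisj1 : Disjoint (Finset.Icc 1 (s-1)) (Finset.Icc s t) := by
      rw [disjoint_left]; intro i hi hi'
      simp only [mem_Icc] at hi hi'; omega
    have hsplit2 : Finset.Icc s t = {s, s+1} ∪ Finset.Icc (s+2) t := by
      ext i; simp only [mem_union, mem_Icc, mem_insert, mem_singleton]; omega
    have hdisj2 : Disjoint ({s, s+1} : Finset ℕ) (Finset.Icc (s+2) t) := by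
      rw [disjoint_left]; intro i hi hi'
      simp only [mem_Icc] at hi'; simp only [mem_insert, mem_singleton] at hi; omega
    have hsum_split : (1:ℝ) = (∑ i ∈ Finset.Icc 1 (s-1), x i)
        + ((x s + x (s+1)) + ∑ i ∈ Finset.Icc (s+2) t, x i) := by
      rw [← hfeas.2.2, hsplit1, sum_union hdisj1, hsplit2, sum_union hdisj2]
      congr 2
      rw [sum_pair (by omega : s ≠ s + 1)]
    have hb1 : ∑ i ∈ Finset.Icc 1 (s-1), x i ≤ ((s-1 : ℕ):ℝ) * x 1 := by
      calc ∑ i ∈ Finset.Icc 1 (s-1), x i ≤ ∑ _i ∈ Finset.Icc 1 (s-1), x 1 := by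
            apply sum_le_sum
            intro i hi
            have hi' := Finset.mem_Icc.1 hi
            exact hmono 1 i le_rfl hi'.1 (by omega)
        _ = ((s-1 : ℕ):ℝ) * x 1 := by rw [sum_const, Nat.card_Icc, nsmul_eq_mul]; norm_num
    have hb2 : ∑ i ∈ Finset.Icc (s+2) t, x i ≤ ((t-s-1 : ℕ):ℝ) * x (s+1) := by
      calc ∑ i ∈ Finset.Icc (s+2) t, x i ≤ ∑ _i ∈ Finset.Icc (s+2) t, x (s+1) := by
            apply sum_le_sum
            intro i hi
            have hi' := Finset.mem_Icc.1 hi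
            exact hmono (s+1) i (by omega) (by omega) hi'.2
        _ = ((t-s-1 : ℕ):ℝ) * x (s+1) := by
            rw [sum_const, Nat.card_Icc, nsmul_eq_mul]
            congr 2
            omega
    have hxs : x (s+1) ≤ x s := hmono s (s+1) (by omega) (by omega) hst
    have hxs0 : 0 ≤ x (s+1) := hfeas.1 _
    have hx10 : 0 ≤ x 1 := hfeas.1 _
    -- cast counts
    have hc1 : ((s-1 : ℕ):ℝ) = (t:ℝ) - 2*r + 3 := by
      have : (s-1 : ℕ) = t - 2*r + 3 := by omega
      rw [this]; push_cast [Nat.cast_sub (show 2*r ≤ t by omega)]; ring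
    have hc2 : ((t-s-1 : ℕ):ℝ) = 2*(r:ℝ) - 5 := by
      have : (t-s-1 : ℕ) = 2*r - 5 := by omega
      rw [this]; push_cast [Nat.cast_sub (show 5 ≤ 2*r by omega)]; ring
    have hr4 : (4:ℝ) ≤ (r:ℝ) := by exact_mod_cast hr
    -- combine
    have hkey : (1:ℝ) ≤ x 1 * (((t:ℝ) - 2*r + 3) + (2*(r:ℝ) - 3)/4) := by
      have e1 : x (s+1) ≤ (x s + x (s+1))/2 := by linarith
      have e2 : x s + x (s+1) ≤ x 1 / 2 := by linarith
      have e3 : ((t-s-1 : ℕ):ℝ) * x (s+1) ≤ (2*(r:ℝ) - 5) * ((x s + x (s+1))/2) := by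
        rw [hc2]
        apply mul_le_mul_of_nonneg_left e1 (by linarith)
      have e4 : (x s + x (s+1)) + (2*(r:ℝ) - 5) * ((x s + x (s+1))/2)
          = (2*(r:ℝ) - 3)/2 * (x s + x (s+1)) := by ring
      have e5 : (2*(r:ℝ) - 3)/2 * (x s + x (s+1)) ≤ (2*(r:ℝ) - 3)/2 * (x 1/2) := by
        apply mul_le_mul_of_nonneg_left e2 (by linarith)
      rw [hc1] at hb1
      linarith [hsum_split, hb1, hb2, e3, e4, e5]
    rw [div_le_iff₀ hG1pos, hG1def]
    linarith [hkey, hx10, mul_nonneg hx10 (by linarith : (0:ℝ) ≤ (r:ℝ) - 4)]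
  have hr4' : (4:ℝ) ≤ (r:ℝ) := by exact_mod_cast hr
  -- nat product identities
  have natprod : ∏ i ∈ Finset.Icc (t-r+1) (t-1), i
      = (t-r+1) * ((∏ i ∈ Finset.Icc (t-r+2) (t-2), i) * (t-1)) := by
    rw [prod_split_bot (show t-r+1 ≤ t-1 by omega) (fun i => i),
      prod_split_top (show t-r+1+1 ≤ t-1 by omega) (show 1 ≤ t-1 by omega) (fun i => i),
      (by omega : t-1-1 = t-2), (by omega : t-r+1+1 = t-r+2)]
  have natid1 : (t-1).choose (r-1) * (r-1).factorial
      = (t-r+1) * ((∏ i ∈ Finset.Icc (t-r+2) (t-2), i) * (t-1)) := by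
    rw [choose_mul_factorial_eq_prod (t-1) (r-1) (by omega),
      show t-1-(r-1)+1 = t-r+1 by omega, natprod]
  have natid2 : ∏ i ∈ Finset.Icc (t-r) (t-1), i
      = (t-r) * ((t-r+1) * ((∏ i ∈ Finset.Icc (t-r+2) (t-2), i) * (t-1))) := by
    rw [prod_split_bot (show t-r ≤ t-1 by omega) (fun i => i), ← natprod]
  have natid3 : (t-1).choose r * r.factorial = ∏ i ∈ Finset.Icc (t-r) (t-1), i := by
    rw [choose_mul_factorial_eq_prod (t-1) r (by omega), show t-1-r+1 = t-r by omega]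
  -- real casts of the identities
  have rid1 : ((t-1).choose (r-1) : ℝ) * ((r-1).factorial : ℝ) = G1 * (Pi * T) := by
    have hc := congrArg (Nat.cast (R := ℝ)) natid1
    push_cast at hc
    rw [hcast_tr, hcast_t1] at hc
    rw [hc, hPidef, hG1g]
    try push_cast
    try ring
  have rid2 : (∏ i ∈ Finset.Icc (t-r) (t-1), (i:ℝ)) = g * (G1 * (Pi * T)) := by
    have hc := congrArg (Nat.cast (R := ℝ)) natid2
    push_cast at hc
    rw [hcast_tr, hcast_t1] at hc
    rw [hc, hPidef, hG1g]
    try push_cast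
    try ring
  have rid3 : ((t-1).choose r : ℝ) * (r.factorial : ℝ)
      = ∏ i ∈ Finset.Icc (t-r) (t-1), (i:ℝ) := by
    have hc := congrArg (Nat.cast (R := ℝ)) natid3
    push_cast at hc
    rw [hc]
  have hfact : (r.factorial : ℝ) = (r:ℝ) * ((r-1).factorial : ℝ) := by
    exact_mod_cast congrArg (Nat.cast (R := ℝ)) (Nat.mul_factorial_pred (by omega : r ≠ 0)).symm
  have hF1pos : (0:ℝ) < ((r-1).factorial : ℝ) := by positivity
  -- CONJUNCT 3
  have hconj3 : 1 / (r.factorial : ℝ) * (∏ i ∈ Finset.Icc (t - r) (t - 1), (i : ℝ)) / T ^ r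
      = lagrangian (completeG (t - 1) r) := by
    rw [lagrangian_complete (t-1) r (by omega), hcast_t1, ← rid3]
    field_simp
    try ring
  -- CONJUNCT 1
  have hmain := main_ineq (show 1 ≤ r by omega) (show 1 ≤ t by omega) hE hfeas hopt hmono
  rw [hcast_t1] at hmain
  have hx1le1 : x 1 ≤ 1 := feasible_le_one (feasibleOn_feasible hfeas) 1
  have hnum : 1 - x 1 ≤ g / G1 := by
    have h2 : g / G1 = 1 - 1/G1 := by
      rw [hG1g]
      field_simp
      ring
    rw [h2]
    linarith [hx1ge]
  have hbase : (0:ℝ) ≤ (1 - x 1)/T := div_nonneg (by linarith) hTpos.le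
  have hpow : ((1 - x 1)/T)^(r-1) ≤ ((g/G1)/T)^(r-1) := by
    exact pow_le_pow_left₀ hbase ((div_le_div_iff_of_pos_right hTpos).2 hnum) _
  have hC1pos : (0:ℝ) ≤ ((t-1).choose (r-1) : ℝ) := by positivity
  have hlag1 : lagrangian E ≤ ((t-1).choose (r-1):ℝ) * ((g/G1)/T)^(r-1) / (r:ℝ) := by
    rw [← hopt, le_div_iff₀ hrpos]
    calc lagEval E x * r = (r:ℝ) * lagEval E x := by ring
      _ ≤ ((t-1).choose (r-1):ℝ) * ((1 - x 1)/T)^(r-1) := hmain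
      _ ≤ ((t-1).choose (r-1):ℝ) * ((g/G1)/T)^(r-1) :=
          mul_le_mul_of_nonneg_left hpow hC1pos
  have hBeq : ((t-1).choose (r-1):ℝ) * ((g/G1)/T)^(r-1) / (r:ℝ)
      = 1 / (r.factorial : ℝ) * g ^ (r - 1) * Pi / (G1 ^ (r - 2) * T ^ (r - 2)) := by
    have hp1 : ((g/G1)/T)^(r-1) = g^(r-1)/(G1^(r-1)*T^(r-1)) := by
      rw [div_div, div_pow, mul_pow]
    have hp2 : G1^(r-1) = G1^(r-2)*G1 := by rw [← pow_succ, show r-2+1 = r-1 by omega]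
    have hp3 : T^(r-1) = T^(r-2)*T := by rw [← pow_succ, show r-2+1 = r-1 by omega]
    rw [hp1, hp2, hp3]
    rw [div_eq_div_iff (by positivity) (by positivity)]
    field_simp
    linear_combination ((t-1).choose (r-1):ℝ) * hfact
      + (r:ℝ) * rid1
  have hconj1 : lagrangian E
      ≤ 1 / (r.factorial : ℝ) * g ^ (r - 1) * Pi / (G1 ^ (r - 2) * T ^ (r - 2)) := by
    rw [← hBeq]; exact hlag1
  -- CONJUNCT 2
  have hc2cast : ((r-2:ℕ):ℝ) = (r:ℝ)-2 := by
    push_cast [Nat.cast_sub (by omega : 2 ≤ r)]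
    ring
  have bern : 1 + ((r-2:ℕ):ℝ)*(1/g) ≤ (1+1/g)^(r-2) :=
    one_add_mul_le_pow (by
      have : (0:ℝ) ≤ 1/g := by positivity
      linarith) (r-2)
  have hgg : (1+1/g)^(r-2) * g^(r-2) = G1^(r-2) := by
    rw [← mul_pow]
    congr 1
    rw [hG1g]
    field_simp
  have hT_eq : T = g + (r:ℝ) - 1 := by rw [hTdef, hgdef]; ring
  have hstep : T < (1 + ((r-2:ℕ):ℝ)*(1/g)) * G1 := by
    rw [hc2cast, hG1g]
    have key : (1 + ((r:ℝ)-2)*(1/g)) * (g+1) = (g + (r:ℝ) - 1) + ((r:ℝ)-2)/g := by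
      field_simp
      ring
    rw [key, ← hT_eq]
    have : (0:ℝ) < ((r:ℝ)-2)/g := div_pos (by linarith) hgpos
    linarith
  have core : g^(r-2)*T < G1^(r-2)*G1 := by
    calc g^(r-2)*T < g^(r-2)*((1 + ((r-2:ℕ):ℝ)*(1/g))*G1) := by
          apply mul_lt_mul_of_pos_left hstep (pow_pos hgpos _)
      _ = (1 + ((r-2:ℕ):ℝ)*(1/g)) * (g^(r-2)*G1) := by ring
      _ ≤ (1+1/g)^(r-2) * (g^(r-2)*G1) :=
          mul_le_mul_of_nonneg_right bern (by positivity)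
      _ = ((1+1/g)^(r-2) * g^(r-2))*G1 := by ring
      _ = G1^(r-2)*G1 := by rw [hgg]
  have hconj2 : 1 / (r.factorial : ℝ) * g ^ (r - 1) * Pi / (G1 ^ (r - 2) * T ^ (r - 2))
      < 1 / (r.factorial : ℝ) * (∏ i ∈ Finset.Icc (t - r) (t - 1), (i : ℝ)) / T ^ r := by
    rw [rid2, div_lt_div_iff₀ (by positivity) (by positivity)]
    have pw1 : g^(r-1) = g^(r-2)*g := by rw [← pow_succ, show r-2+1 = r-1 by omega]
    have pw2 : T^r = T^(r-2)*(T*T) := by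
      rw [← mul_assoc, ← pow_succ, ← pow_succ, show r-2+1+1 = r by omega]
    rw [pw1, pw2]
    have cpos : (0:ℝ) < 1/(r.factorial:ℝ)*Pi*g*T^(r-2)*T := by positivity
    calc 1/(r.factorial:ℝ)*(g^(r-2)*g)*Pi*(T^(r-2)*(T*T))
        = (1/(r.factorial:ℝ)*Pi*g*T^(r-2)*T) * (g^(r-2)*T) := by ring
      _ < (1/(r.factorial:ℝ)*Pi*g*T^(r-2)*T) * (G1^(r-2)*G1) :=
          mul_lt_mul_of_pos_left core cpos
      _ = 1/(r.factorial:ℝ)*(g*(G1*(Pi*T)))*(G1^(r-2)*T^(r-2)) := by ring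
  exact ⟨hconj1, hconj2, hconj3⟩
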